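/- Let N ≥ n_x be positive integers, A ∈ ℝ^{n_x×n_x}, B ∈ ℝ^{n_x×2}, and let w₁, w₂ ∈ ℝ² be nonzero vectors. Suppose that for each k ∈ {1, 2} and for every choice of n_x distinct indices P₁, …, P_{n_x} ∈ {1, …, N}, the matrix [A^{N−P₁}Bw_k, …, A^{N−P_{n_x}}Bw_k] (whose columns are the vectors A^{N−P_j}Bw_k) has rank n_x. Then for every nonzero η ∈ ℝ^{n_x}, the number of indices i ∈ {1, …, N} for which ⟪w₁, Bᵀ(Aᵀ)^{N−i}η⟫ = 0 or ⟪w₂, Bᵀ(Aᵀ)^{N−i}η⟫ = 0 is at most 2n_x − 2. -/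

import Mathlib

open RealInnerProductSpace Matrix

open scoped Classical

/-- Identification of a plain vector in `Fin n → ℝ` with a point of Euclidean space. -/
noncomputable def toE {n : ℕ} (v : Fin n → ℝ) : EuclideanSpace ℝ (Fin n) :=
  (EuclideanSpace.equiv (Fin n) ℝ).symm v

lemma full_rank_mulVec_inj {n : ℕ} (M : Matrix (Fin n) (Fin n) ℝ) (h : M.rank = n) :
    Function.Injective M.mulVecLin := by
  have hsurj : Function.Surjective M.mulVecLin := by
    rw [← LinearMap.range_eq_top]
    apply Submodule.eq_top_of_finrank_eq
    rw [← Matrix.rank, h]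
    simp
  exact (LinearMap.injective_iff_surjective.mpr hsurj)

lemma inner_eq_aux {nx : ℕ} (A : Matrix (Fin nx) (Fin nx) ℝ) (B : Matrix (Fin nx) (Fin 2) ℝ)
    (w : EuclideanSpace ℝ (Fin 2)) (η : Fin nx → ℝ) (e : ℕ) :
    ⟪w, toE ((Bᵀ * (Aᵀ) ^ e) *ᵥ η)⟫ = ((A ^ e) *ᵥ (B *ᵥ fun t => w t)) ⬝ᵥ η := by
  have h1 : Bᵀ * (Aᵀ) ^ e = (A ^ e * B)ᵀ := by rw [transpose_mul, transpose_pow]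
  have h2 : (A ^ e) *ᵥ (B *ᵥ fun t => w t) = (A ^ e * B) *ᵥ (fun t => w t) :=
    mulVec_mulVec _ _ _
  rw [h1, h2, mulVec_transpose]
  have hL : ⟪w, toE (η ᵥ* (A ^ e * B))⟫ = (fun t => w t) ⬝ᵥ (η ᵥ* (A ^ e * B)) := by
    simp [toE, PiLp.inner_apply, RCLike.inner_apply, dotProduct]
    ring
  rw [hL, dotProduct_comm, ← dotProduct_mulVec, dotProduct_comm]

lemma key_card {nx N : ℕ} (hnx : 0 < nx)
    (A : Matrix (Fin nx) (Fin nx) ℝ) (B : Matrix (Fin nx) (Fin 2) ℝ)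
    (w : EuclideanSpace ℝ (Fin 2))
    (hrank : ∀ P : Fin nx → ℕ, (∀ j, P j ∈ Finset.Icc 1 N) → Function.Injective P →
        (Matrix.of fun r (j : Fin nx) =>
          ((A ^ (N - P j)) *ᵥ (B *ᵥ fun t => w t)) r).rank = nx)
    (η : Fin nx → ℝ) (hη : η ≠ 0) :
    ((Finset.Icc 1 N).filter fun i =>
      ⟪w, toE ((Bᵀ * (Aᵀ) ^ (N - i)) *ᵥ η)⟫ = 0).card ≤ nx - 1 := by
  by_contra hcon
  push_neg at hcon
  set s := (Finset.Icc 1 N).filter fun i =>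
      ⟪w, toE ((Bᵀ * (Aᵀ) ^ (N - i)) *ᵥ η)⟫ = 0 with hs
  have hcard : nx ≤ s.card := by omega
  set P : Fin nx → ℕ := fun j => s.orderEmbOfCardLe hcard j with hP
  have hmem : ∀ j, P j ∈ s := fun j => s.orderEmbOfCardLe_mem hcard j
  have hPIcc : ∀ j, P j ∈ Finset.Icc 1 N := fun j => Finset.mem_of_mem_filter _ (hmem j)
  have hinj : Function.Injective P := (s.orderEmbOfCardLe hcard).injective
  set M : Matrix (Fin nx) (Fin nx) ℝ := Matrix.of fun r (j : Fin nx) =>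
      ((A ^ (N - P j)) *ᵥ (B *ᵥ fun t => w t)) r with hM
  have hrk : M.rank = nx := hrank P hPIcc hinj
  have hrkT : Mᵀ.rank = nx := by rw [Matrix.rank_transpose]; exact hrk
  have hinjT := full_rank_mulVec_inj Mᵀ hrkT
  have hzero : Mᵀ.mulVecLin η = Mᵀ.mulVecLin 0 := by
    rw [map_zero]
    funext j
    have hmj := hmem j
    rw [hs, Finset.mem_filter] at hmj
    have h0 : ⟪w, toE ((Bᵀ * (Aᵀ) ^ (N - P j)) *ᵥ η)⟫ = 0 := hmj.2
    rw [inner_eq_aux] at h0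
    have he : (Mᵀ *ᵥ η) j = ((A ^ (N - P j)) *ᵥ (B *ᵥ fun t => w t)) ⬝ᵥ η := by
      simp only [hM, Matrix.mulVec, dotProduct, Matrix.transpose_apply, Matrix.of_apply]
    rw [Matrix.mulVecLin_apply, Pi.zero_apply, he, h0]
  exact hη (hinjT hzero)

/-- If for each `k ∈ {1,2}` and every choice of `n_x` distinct indices
`P₁, …, P_{n_x} ∈ {1, …, N}` the matrix whose columns are `A^{N−P_j}Bw_k` has rank `n_x`,
then for every nonzero `η` the number of indices `i ∈ {1, …, N}` with
`⟪w₁, Bᵀ(Aᵀ)^{N−i}η⟫ = 0` or `⟪w₂, Bᵀ(Aᵀ)^{N−i}η⟫ = 0` is at most `2n_x − 2`. -/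
theorem stmt_11 (nx N : ℕ) (hnx : 0 < nx) (hN : nx ≤ N)
    (A : Matrix (Fin nx) (Fin nx) ℝ) (B : Matrix (Fin nx) (Fin 2) ℝ)
    (w₁ w₂ : EuclideanSpace ℝ (Fin 2)) (hw₁ : w₁ ≠ 0) (hw₂ : w₂ ≠ 0)
    (hrank : ∀ w ∈ ({w₁, w₂} : Set (EuclideanSpace ℝ (Fin 2))),
      ∀ P : Fin nx → ℕ, (∀ j, P j ∈ Finset.Icc 1 N) → Function.Injective P →
        (Matrix.of fun r (j : Fin nx) =>
          ((A ^ (N - P j)) *ᵥ (B *ᵥ fun t => w t)) r).rank = nx) :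
    ∀ η : Fin nx → ℝ, η ≠ 0 →
      ((Finset.Icc 1 N).filter fun i =>
        ⟪w₁, toE ((Bᵀ * (Aᵀ) ^ (N - i)) *ᵥ η)⟫ = 0 ∨
        ⟪w₂, toE ((Bᵀ * (Aᵀ) ^ (N - i)) *ᵥ η)⟫ = 0).card ≤ 2 * nx - 2 := by
  intro η hη
  have h1 := key_card hnx A B w₁ (hrank w₁ (by simp)) η hη
  have h2 := key_card hnx A B w₂ (hrank w₂ (by simp)) η hη
  have hsub : ((Finset.Icc 1 N).filter fun i =>
        ⟪w₁, toE ((Bᵀ * (Aᵀ) ^ (N - i)) *ᵥ η)⟫ = 0 ∨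
        ⟪w₂, toE ((Bᵀ * (Aᵀ) ^ (N - i)) *ᵥ η)⟫ = 0) ⊆
      ((Finset.Icc 1 N).filter fun i => ⟪w₁, toE ((Bᵀ * (Aᵀ) ^ (N - i)) *ᵥ η)⟫ = 0) ∪
      ((Finset.Icc 1 N).filter fun i => ⟪w₂, toE ((Bᵀ * (Aᵀ) ^ (N - i)) *ᵥ η)⟫ = 0) := by
    intro i hi
    rw [Finset.mem_filter] at hi
    rcases hi.2 with h | h
    · exact Finset.mem_union_left _ (Finset.mem_filter.mpr ⟨hi.1, h⟩)
    · exact Finset.mem_union_right _ (Finset.mem_filter.mpr ⟨hi.1, h⟩)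
  calc _ ≤ _ := Finset.card_le_card hsub
    _ ≤ _ + _ := Finset.card_union_le _ _
    _ ≤ 2 * nx - 2 := by omega
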